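/- The Dullin–Matveev Hamiltonian H₄ = J₁² + J₂² + (1 + x₃/(x₃+e) − (x₃²−a²)/(4(x₃+e)²))J₃² + c·x₁/(x₃+e)^{1/2} + d/(x₃+e) Poisson-commutes with the corresponding cubic integral K₄ (formula (K) with α = 1/2, n(x₃) = c(x₃+e)^{1/2} and f,g,ℓ determined by (fgml)), on the set x₃ > −e, x₁²+x₂²+x₃² = a², x₁J₁+x₂J₂+x₃J₃ = 0. -/

import Mathlib

open scoped BigOperators

/-- Index of `x_i` (i = 0,1,2) in phase space `ℝ⁶ = Fin 6 → ℝ`. -/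
def xIdx (i : Fin 3) : Fin 6 := ⟨i.1, by omega⟩
/-- Index of `J_i` (i = 0,1,2) in phase space. -/
def jIdx (i : Fin 3) : Fin 6 := ⟨i.1 + 3, by omega⟩

/-- Partial derivative of `F` in the `i`-th coordinate direction. -/
noncomputable def pd (i : Fin 6) (F : (Fin 6 → ℝ) → ℝ) (z : Fin 6 → ℝ) : ℝ :=
  fderiv ℝ F z (Pi.single i 1)

/-- Levi-Civita symbol on `Fin 3`. -/
def eps (i j k : Fin 3) : ℝ :=
  if (i,j,k) = (0,1,2) ∨ (i,j,k) = (1,2,0) ∨ (i,j,k) = (2,0,1) then 1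
  else if (i,j,k) = (1,0,2) ∨ (i,j,k) = (2,1,0) ∨ (i,j,k) = (0,2,1) then -1
  else 0

/-- The e(3) Poisson bracket on smooth functions of `(x, J) ∈ ℝ⁶`, generated by
`{J_i,J_j} = ε_{ijk} J_k`, `{J_i,x_j} = ε_{ijk} x_k`, `{x_i,x_j} = 0`. -/
noncomputable def e3Bracket (F G : (Fin 6 → ℝ) → ℝ) (z : Fin 6 → ℝ) : ℝ :=
  ∑ i : Fin 3, ∑ j : Fin 3, ∑ k : Fin 3, eps i j k *
    ( z (jIdx k) * pd (jIdx i) F z * pd (jIdx j) G z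
    + z (xIdx k) * pd (jIdx i) F z * pd (xIdx j) G z
    + z (xIdx k) * pd (xIdx i) F z * pd (jIdx j) G z )

private lemma hasDerivAt_W (e : ℝ) {t : ℝ} (ht : 0 < t + e) :
    HasDerivAt (fun u : ℝ => (u + e) ^ ((1:ℝ)/2)) ((2 * (t + e) ^ ((1:ℝ)/2))⁻¹) t := by
  have h0 : HasDerivAt (fun u : ℝ => u + e) 1 t := (hasDerivAt_id t).add_const e
  have h1 : HasDerivAt (fun x : ℝ => x ^ ((1:ℝ)/2)) (((1:ℝ)/2) * (t+e) ^ ((1:ℝ)/2 - 1)) (t+e) :=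
    Real.hasDerivAt_rpow_const (Or.inl ht.ne')
  have h2 := h1.comp t h0
  have h3 : HasDerivAt (fun u : ℝ => (u + e) ^ ((1:ℝ)/2))
      (((1:ℝ)/2) * (t+e) ^ ((1:ℝ)/2 - 1) * 1) t := h2
  convert h3 using 1
  rw [show ((1:ℝ)/2 - 1) = -((1:ℝ)/2) by norm_num, Real.rpow_neg ht.le]
  ring

private lemma rpow_half_sq {s : ℝ} (hs : 0 ≤ s) : (s ^ ((1:ℝ)/2)) ^ 2 = s := by
  rw [← Real.rpow_natCast (s ^ ((1:ℝ)/2)) 2, ← Real.rpow_mul hs]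
  norm_num


set_option maxHeartbeats 1600000 in
/-- The Dullin–Matveev system: with `α = 1/2`, `n(x₃) = c (x₃+e)^{1/2}`, `g = d/n²`,
`m = −n′/α`, `ℓ = nn″/n′` and `f` given by (fgml), the Hamiltonian
`H₄ = J₁²+J₂²+(1 + x₃/(x₃+e) − (x₃²−a²)/(4(x₃+e)²))J₃² + m x₁ + g`
(which is `J₁²+J₂²+(…)J₃² + c x₁/(x₃+e)^{1/2} + d/(x₃+e)` after the rescaling
`c → −c`, `d → d/c²`) Poisson-commutes with the cubic integral `K₄` of formula (K)
on the set `x₃ > −e`, `x₁²+x₂²+x₃² = a²`, `x·J = 0`. -/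
theorem dullin_matveev_commute (a c d e : ℝ) (hc : c ≠ 0) (α : ℝ) (hα : α = 1/2)
    (n m ℓ g f : ℝ → ℝ)
    (hn : n = fun t => c * (t + e) ^ ((1:ℝ)/2))
    (hg : g = fun t => d / (n t)^2)
    (hm : m = fun t => -(deriv n t) / α)
    (hℓ : ℓ = fun t => n t * (deriv (deriv n) t) / deriv n t)
    (hf : f = fun t => 1 - 3*α^2
        - α * (3*t*(m t) - 2*(a^2 - t^2)*(deriv m t)) / n t
        + (t*(ℓ t) - (a^2 - t^2)*(deriv ℓ t)) / n t)
    (H K : (Fin 6 → ℝ) → ℝ)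
    (hH : H = fun z => (z (jIdx 0))^2 + (z (jIdx 1))^2
        + (1 + z (xIdx 2) / (z (xIdx 2) + e)
            - ((z (xIdx 2))^2 - a^2) / (4*(z (xIdx 2) + e)^2)) * (z (jIdx 2))^2
        + m (z (xIdx 2)) * z (xIdx 0) + g (z (xIdx 2)))
    (hK : K = fun z => -2*α*(z (jIdx 2)) *
          (-(α^2)*(z (jIdx 2))^2 + (z (jIdx 0))^2 + (z (jIdx 1))^2
            + f (z (xIdx 2)) * (z (jIdx 2))^2 + g (z (xIdx 2)))
        - n (z (xIdx 2)) * z (jIdx 0)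
        - ℓ (z (xIdx 2)) * z (xIdx 0) * z (jIdx 2)) :
    ∀ z : Fin 6 → ℝ, -e < z (xIdx 2) →
      (z (xIdx 0))^2 + (z (xIdx 1))^2 + (z (xIdx 2))^2 = a^2 →
      z (xIdx 0) * z (jIdx 0) + z (xIdx 1) * z (jIdx 1) + z (xIdx 2) * z (jIdx 2) = 0 →
      e3Bracket H K z = 0 := by
  subst hα hH hK
  intro z hz3 hsph horth
  have ht : 0 < z (xIdx 2) + e := by linarith
  -- square-root abbreviation
  set r : ℝ := (z (xIdx 2) + e) ^ ((1:ℝ)/2) with hrdef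
  have hr0 : 0 < r := by rw [hrdef]; exact Real.rpow_pos_of_pos ht _
  have hr2 : r ^ 2 = z (xIdx 2) + e := by rw [hrdef]; exact rpow_half_sq ht.le
  have hWpos : ∀ u : ℝ, 0 < u + e → (0:ℝ) < (u+e) ^ ((1:ℝ)/2) :=
    fun u hu => Real.rpow_pos_of_pos hu _
  have hW : ∀ u : ℝ, 0 < u + e →
      HasDerivAt (fun v : ℝ => (v+e) ^ ((1:ℝ)/2)) ((2*(u+e) ^ ((1:ℝ)/2))⁻¹) u :=
    fun u hu => hasDerivAt_W e hu
  -- n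
  have hnd : ∀ u : ℝ, 0 < u + e →
      HasDerivAt n (c * (2*(u+e) ^ ((1:ℝ)/2))⁻¹) u := by
    intro u hu; rw [hn]; exact (hW u hu).const_mul c
  have hnderiv : ∀ u : ℝ, 0 < u + e → deriv n u = c * (2*(u+e) ^ ((1:ℝ)/2))⁻¹ :=
    fun u hu => (hnd u hu).deriv
  -- m
  have hmEq : ∀ u : ℝ, 0 < u + e → m u = -c * ((u+e) ^ ((1:ℝ)/2))⁻¹ := by
    intro u hu
    have h0 := (hWpos u hu).ne'
    simp only [hm]
    rw [hnderiv u hu]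
    field_simp

  have hmev : ∀ u : ℝ, 0 < u + e →
      m =ᶠ[nhds u] fun v => -c * ((v+e) ^ ((1:ℝ)/2))⁻¹ := by
    intro u hu
    filter_upwards [eventually_gt_nhds (show -e < u by linarith)] with v hv
    exact hmEq v (by linarith)
  have hmd : ∀ u : ℝ, 0 < u + e →
      HasDerivAt m (c/(2*((u+e) ^ ((1:ℝ)/2))^3)) u := by
    intro u hu
    have h0 := (hWpos u hu).ne'
    have hb := ((hW u hu).inv h0).const_mul (-c)
    have hb2 : HasDerivAt (fun v : ℝ => -c * ((v+e) ^ ((1:ℝ)/2))⁻¹)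
        (c/(2*((u+e) ^ ((1:ℝ)/2))^3)) u := by
      refine hb.congr_deriv ?_
      ring
    exact hb2.congr_of_eventuallyEq (hmev u hu)
  -- second derivative of n
  have hd2n : ∀ u : ℝ, 0 < u + e →
      deriv (deriv n) u = -c/(4*((u+e) ^ ((1:ℝ)/2))^3) := by
    intro u hu
    have h0 := (hWpos u hu).ne'
    have hev : deriv n =ᶠ[nhds u] fun v => c * (2*(v+e) ^ ((1:ℝ)/2))⁻¹ := by
      filter_upwards [eventually_gt_nhds (show -e < u by linarith)] with v hv
      exact hnderiv v (by linarith)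
    rw [hev.deriv_eq]
    have hpos2 : (2*(u+e) ^ ((1:ℝ)/2)) ≠ 0 := by
      have := hWpos u hu; positivity
    have hb := (((hW u hu).const_mul 2).inv hpos2).const_mul c
    rw [show deriv (fun v : ℝ => c * (2*(v+e) ^ ((1:ℝ)/2))⁻¹) u = _ from hb.deriv]
    field_simp
    ring
  -- ℓ
  have hℓEq : ∀ u : ℝ, 0 < u + e → ℓ u = -(c/2) * ((u+e) ^ ((1:ℝ)/2))⁻¹ := by
    intro u hu
    have h0 := (hWpos u hu).ne'
    simp only [hℓ]
    rw [hd2n u hu, hnderiv u hu]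
    simp only [hn]
    field_simp
    ring
  have hℓev : ∀ u : ℝ, 0 < u + e →
      ℓ =ᶠ[nhds u] fun v => -(c/2) * ((v+e) ^ ((1:ℝ)/2))⁻¹ := by
    intro u hu
    filter_upwards [eventually_gt_nhds (show -e < u by linarith)] with v hv
    exact hℓEq v (by linarith)
  have hℓd : ∀ u : ℝ, 0 < u + e →
      HasDerivAt ℓ (c/(4*((u+e) ^ ((1:ℝ)/2))^3)) u := by
    intro u hu
    have h0 := (hWpos u hu).ne'
    have hb := ((hW u hu).inv h0).const_mul (-(c/2))
    have hb2 : HasDerivAt (fun v : ℝ => -(c/2) * ((v+e) ^ ((1:ℝ)/2))⁻¹)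
        (c/(4*((u+e) ^ ((1:ℝ)/2))^3)) u := by
      refine hb.congr_deriv ?_
      ring
    exact hb2.congr_of_eventuallyEq (hℓev u hu)
  -- g
  have hgEq : ∀ u : ℝ, 0 < u + e → g u = d * (c^2*(u+e))⁻¹ := by
    intro u hu
    simp only [hg, hn]
    rw [mul_pow, rpow_half_sq hu.le, div_eq_mul_inv]
  have hgev : ∀ u : ℝ, 0 < u + e →
      g =ᶠ[nhds u] fun v => d * (c^2*(v+e))⁻¹ := by
    intro u hu
    filter_upwards [eventually_gt_nhds (show -e < u by linarith)] with v hv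
    exact hgEq v (by linarith)
  have hgd : ∀ u : ℝ, 0 < u + e → HasDerivAt g (-d/(c^2*(u+e)^2)) u := by
    intro u hu
    have h1 : HasDerivAt (fun v : ℝ => c^2*(v+e)) (c^2*1) u :=
      ((hasDerivAt_id u).add_const e).const_mul (c^2)
    have hne : c^2*(u+e) ≠ 0 := by positivity
    have hb := (h1.inv hne).const_mul d
    have hb2 : HasDerivAt (fun v : ℝ => d * (c^2*(v+e))⁻¹) (-d/(c^2*(u+e)^2)) u := by
      refine hb.congr_deriv ?_
      field_simp
    exact hb2.congr_of_eventuallyEq (hgev u hu)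
  -- f
  have hfEq : ∀ u : ℝ, 0 < u + e →
      f u = 1/4 + u/(u+e) + (a^2-u^2)/(4*(u+e)^2) := by
    intro u hu
    have h0 := (hWpos u hu).ne'
    have hw2 : ((u+e) ^ ((1:ℝ)/2))^2 = u+e := rpow_half_sq hu.le
    simp only [hf]
    rw [hmEq u hu, hℓEq u hu, (hmd u hu).deriv, (hℓd u hu).deriv]
    simp only [hn]
    set w := (u+e) ^ ((1:ℝ)/2) with hw
    rw [← hw2]
    field_simp
    ring
  -- rational-function derivative builders at the point
  have htne : z (xIdx 2) + e ≠ 0 := ht.ne'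
  have hid : HasDerivAt (fun u : ℝ => u + e) 1 (z (xIdx 2)) := (hasDerivAt_id _).add_const e
  have hpart1 := (hasDerivAt_id (z (xIdx 2))).div hid htne
  have hden2 := (hid.pow 2).const_mul (4:ℝ)
  have hne2 : 4*(z (xIdx 2)+e)^2 ≠ 0 := by positivity
  have hpart2 := ((hasDerivAt_pow 2 (z (xIdx 2))).const_sub (a^2)).div hden2 hne2
  have hpart2' := ((hasDerivAt_pow 2 (z (xIdx 2))).sub_const (a^2)).div hden2 hne2
  have hF := ((hasDerivAt_const (z (xIdx 2)) ((1:ℝ)/4)).add hpart1).add hpart2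
  have hPhiRaw := ((hasDerivAt_const (z (xIdx 2)) (1:ℝ)).add hpart1).sub hpart2'
  have hPhid : HasDerivAt (fun u : ℝ => 1 + u/(u+e) - (u^2 - a^2)/(4*(u+e)^2))
      ((r^2 - z (xIdx 2))/r^4 - z (xIdx 2)/(2*r^4) - (a^2 - (z (xIdx 2))^2)/(2*r^6))
      (z (xIdx 2)) := by
    refine hPhiRaw.congr_deriv ?_
    simp only [Pi.pow_apply, id]
    rw [← hr2]
    field_simp
    ring
  have hfd : HasDerivAt f
      ((r^2 - z (xIdx 2))/r^4 - z (xIdx 2)/(2*r^4) - (a^2 - (z (xIdx 2))^2)/(2*r^6))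
      (z (xIdx 2)) := by
    have hb2 : HasDerivAt (fun u : ℝ => 1/4 + u/(u+e) + (a^2-u^2)/(4*(u+e)^2))
        ((r^2 - z (xIdx 2))/r^4 - z (xIdx 2)/(2*r^4) - (a^2 - (z (xIdx 2))^2)/(2*r^6))
        (z (xIdx 2)) := by
      refine hF.congr_deriv ?_
      simp only [Pi.pow_apply, id]
      rw [← hr2]
      field_simp
      ring
    refine hb2.congr_of_eventuallyEq ?_
    filter_upwards [eventually_gt_nhds hz3] with u hu
    exact hfEq u (by linarith)
  -- values and derivatives at the point, in terms of r
  have hmt : m (z (xIdx 2)) = -c * r⁻¹ := by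
    have h := hmEq _ ht; rw [← hrdef] at h; exact h
  have hℓt : ℓ (z (xIdx 2)) = -(c/2) * r⁻¹ := by
    have h := hℓEq _ ht; rw [← hrdef] at h; exact h
  have hnt : n (z (xIdx 2)) = c * r := by
    simp only [hn, hrdef]
  have hgt : g (z (xIdx 2)) = d * (c^2*r^2)⁻¹ := by
    have h := hgEq _ ht; rw [← hr2] at h; exact h
  have hft : f (z (xIdx 2)) = 1/4 + z (xIdx 2)/r^2 + (a^2 - (z (xIdx 2))^2)/(4*(r^2)^2) := by
    have h := hfEq _ ht; rw [← hr2] at h; exact h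
  have hmd_t := hmd _ ht; rw [← hrdef] at hmd_t
  have hℓd_t := hℓd _ ht; rw [← hrdef] at hℓd_t
  have hgd_t := hgd _ ht; rw [← hr2] at hgd_t
  have hnd_t := hnd _ ht; rw [← hrdef] at hnd_t
  -- coordinate projections
  have hp : ∀ i : Fin 6, HasFDerivAt (fun w : Fin 6 → ℝ => w i)
      (ContinuousLinearMap.proj i : (Fin 6 → ℝ) →L[ℝ] ℝ) z :=
    fun i => (ContinuousLinearMap.proj i : (Fin 6 → ℝ) →L[ℝ] ℝ).hasFDerivAt
  have hsq : ∀ y : ℝ, HasDerivAt (fun v : ℝ => v^2) (2*y) y :=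
    fun y => by simpa using hasDerivAt_pow 2 y
  -- total derivative of H
  have hH1 := (hsq (z (jIdx 0))).comp_hasFDerivAt z (hp (jIdx 0))
  have hH2 := (hsq (z (jIdx 1))).comp_hasFDerivAt z (hp (jIdx 1))
  have hH3 := (hPhid.comp_hasFDerivAt z (hp (xIdx 2))).mul
      ((hsq (z (jIdx 2))).comp_hasFDerivAt z (hp (jIdx 2)))
  have hH4 := (hmd_t.comp_hasFDerivAt z (hp (xIdx 2))).mul (hp (xIdx 0))
  have hH5 := hgd_t.comp_hasFDerivAt z (hp (xIdx 2))
  have hfdH := (((hH1.add hH2).add hH3).add hH4).add hH5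
  have hfdH_eq : fderiv ℝ (fun w : Fin 6 → ℝ => (w (jIdx 0))^2 + (w (jIdx 1))^2
        + (1 + w (xIdx 2) / (w (xIdx 2) + e)
            - ((w (xIdx 2))^2 - a^2) / (4*(w (xIdx 2) + e)^2)) * (w (jIdx 2))^2
        + m (w (xIdx 2)) * w (xIdx 0) + g (w (xIdx 2))) z = _ := hfdH.fderiv
  -- total derivative of K
  have hB1 := ((hsq (z (jIdx 2))).comp_hasFDerivAt z (hp (jIdx 2))).const_mul (-((1/2:ℝ)^2))
  have hB := (((hB1.add hH1).add hH2).add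
      ((hfd.comp_hasFDerivAt z (hp (xIdx 2))).mul
        ((hsq (z (jIdx 2))).comp_hasFDerivAt z (hp (jIdx 2))))).add hH5
  have hK1 := (hp (jIdx 2)).const_mul (-2*(1/2:ℝ))
  have hKmain := hK1.mul hB
  have hKn := (hnd_t.comp_hasFDerivAt z (hp (xIdx 2))).mul (hp (jIdx 0))
  have hKl := ((hℓd_t.comp_hasFDerivAt z (hp (xIdx 2))).mul (hp (xIdx 0))).mul (hp (jIdx 2))
  have hfdK := (hKmain.sub hKn).sub hKl
  have hfdK_eq : fderiv ℝ (fun w : Fin 6 → ℝ => -2*(1/2)*(w (jIdx 2)) *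
          (-((1/2)^2)*(w (jIdx 2))^2 + (w (jIdx 0))^2 + (w (jIdx 1))^2
            + f (w (xIdx 2)) * (w (jIdx 2))^2 + g (w (xIdx 2)))
        - n (w (xIdx 2)) * w (jIdx 0)
        - ℓ (w (xIdx 2)) * w (xIdx 0) * w (jIdx 2)) z = _ := hfdK.fderiv
  simp only [Function.comp_apply, Pi.add_apply, Pi.mul_apply, hmt, hℓt, hnt, hgt, hft] at hfdH_eq hfdK_eq
  simp only [e3Bracket, pd, Fin.sum_univ_three]
  rw [hfdH_eq, hfdK_eq]
  simp only [eps, ContinuousLinearMap.add_apply, ContinuousLinearMap.sub_apply,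
    ContinuousLinearMap.smul_apply, ContinuousLinearMap.proj_apply, smul_eq_mul,
    Pi.single_apply, xIdx, jIdx, Fin.isValue, Fin.mk.injEq, Prod.mk.injEq]
  norm_num [Fin.ext_iff, Fin.val_zero, Fin.val_one, Fin.val_two]
  norm_num [xIdx, jIdx] at horth hsph hr2
  rw [← hr2]
  have hrne : r ≠ 0 := ne_of_gt hr0
  field_simp
  linear_combination (4*c^3*r^3) * ((-(2*r^2* z ⟨4, by norm_num⟩ + z 1 * z ⟨5, by norm_num⟩)) * horth + (z ⟨4, by norm_num⟩ * z ⟨5, by norm_num⟩) * hsph)
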